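/- If every message in history as with a non-empty nonce intersection back to an earlier message is returned to its apparent originator (no-leaks), and sender α sends nonce n only in messages addressed to β, and β satisfies no-leaks in its restricted history, then any later message in uHist(as, β) whose content contains n is addressed to α. -/

import Mathlib

abbrev Uid := ℕ
abbrev Nonce := ℕ
abbrev Item := Nonce ⊕ Uid

inductive Act : Type
  | msg (rec sender : Uid) (content : List Item)
  | invent (user : Uid) (what : Nonce)

def involves (u : Uid) : Act → Bool
  | .msg r s _ => r = u || s = u
  | .invent v _ => v = u

def uHist (as : List Act) (u : Uid) : List Act :=
  as.filter (involves u)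

def noLeaks (as : List Act) : Prop :=
  ∀ (i j : ℕ) α β γ vli vlj, i < j →
    as[i]? = some (Act.msg β α vli) → as[j]? = some (Act.msg γ β vlj) →
    (∃ n : Nonce, Sum.inl n ∈ vli ∧ Sum.inl n ∈ vlj) → γ = α



lemma filter_mem_get {α : Type*} (p : α → Bool) :
    ∀ (as : List α) (j : ℕ) (b : α), as[j]? = some b → p b →
      ∃ j' : ℕ, (as.filter p)[j']? = some b := by
  intro as j b hj hb
  have hmem : b ∈ as.filter p := List.mem_filter.2 ⟨List.mem_of_getElem? hj, hb⟩
  exact List.getElem?_of_mem hmem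

lemma filter_order {α : Type*} (p : α → Bool) :
    ∀ (as : List α) (i j : ℕ) (a b : α), i < j →
      as[i]? = some a → as[j]? = some b → p a → p b →
      ∃ i' j' : ℕ, i' < j' ∧ (as.filter p)[i']? = some a ∧ (as.filter p)[j']? = some b := by
  intro as
  induction as with
  | nil => intro i j a b _ hi; simp at hi
  | cons x t ih =>
    intro i j a b hij hi hj ha hb
    cases i with
    | zero =>
      simp at hi; subst hi
      cases j with
      | zero => omega
      | succ l =>
        simp only [List.getElem?_cons_succ] at hj
        obtain ⟨j', hj'⟩ := filter_mem_get p t l b hj hb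
        refine ⟨0, j' + 1, Nat.succ_pos _, ?_, ?_⟩ <;>
          simp [List.filter_cons, ha, hj']
    | succ k =>
      cases j with
      | zero => omega
      | succ l =>
        simp only [List.getElem?_cons_succ] at hi hj
        obtain ⟨i', j', h1, h2, h3⟩ := ih k l a b (by omega) hi hj ha hb
        by_cases hx : p x
        · exact ⟨i' + 1, j' + 1, by omega, by simp [List.filter_cons, hx, h2],
            by simp [List.filter_cons, hx, h3]⟩
        · exact ⟨i', j', h1, by simp [List.filter_cons, hx, h2],
            by simp [List.filter_cons, hx, h3]⟩

theorem nonce_returned (as : List Act) (n : Nonce) (α β γ : Uid)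
    (j : ℕ) (vlj : List Item)
    (hnl : noLeaks (uHist as β))
    (hi : ∃ i vli, i < j ∧ as[i]? = some (.msg β α vli) ∧
      (Sum.inl n : Item) ∈ vli ∧
      ∀ k r s vk, k < j → as[k]? = some (.msg r s vk) →
        (Sum.inl n : Item) ∈ vk → k = i)
    (hj : as[j]? = some (.msg γ β vlj))
    (hn : (Sum.inl n : Item) ∈ vlj) :
    γ = α := by
  obtain ⟨i, vli, hij, hgi, hni, _⟩ := hi
  have ha : involves β (.msg β α vli) = true := by simp [involves]
  have hb : involves β (.msg γ β vlj) = true := by simp [involves]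
  obtain ⟨i', j', h1, h2, h3⟩ := filter_order (involves β) as i j _ _ hij hgi hj ha hb
  exact hnl i' j' α β γ vli vlj h1 h2 h3 ⟨n, hni, hn⟩
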